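/- For all i, j ∈ ℕ, ∫₀^∞ x·e^{−x}·L_i(x)·L_j^{(1)}(x) dx = (i+1)·δ_{i,j} − i·δ_{i−1,j}. -/

import Mathlib

open MeasureTheory Finset

/-- Generalized Laguerre polynomial
`L_n^{(α)}(x) = ∑_{k=0}^{n} ((−1)^k/k!)·((α+k+1)⋯(α+n)/(n−k)!)·x^k`,
defined for any real `α`. -/
noncomputable def genLaguerre (n : ℕ) (α : ℝ) (x : ℝ) : ℝ :=
  ∑ k ∈ Finset.range (n + 1),
    ((-1 : ℝ) ^ k / k.factorial) *
      ((∏ j ∈ Finset.Icc (k + 1) n, (α + j)) / (n - k).factorial) * x ^ k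

/-! ### Auxiliary analytic lemmas -/

lemma aux_integrableOn_pow_exp (n : ℕ) :
    IntegrableOn (fun x : ℝ => x ^ n * Real.exp (-x)) (Set.Ioi 0) := by
  have h := Real.GammaIntegral_convergent (s := (n : ℝ) + 1) (by positivity)
  have he : (fun x : ℝ => Real.exp (-x) * x ^ ((n : ℝ) + 1 - 1)) =
      fun x : ℝ => x ^ n * Real.exp (-x) := by
    funext x
    rw [show (n : ℝ) + 1 - 1 = (n : ℝ) by ring, Real.rpow_natCast, mul_comm]
  rwa [he] at h

lemma aux_integral_pow_exp (n : ℕ) :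
    ∫ x in Set.Ioi (0:ℝ), x ^ n * Real.exp (-x) = n.factorial := by
  have h := Real.Gamma_eq_integral (s := (n : ℝ) + 1) (by positivity)
  rw [Real.Gamma_nat_eq_factorial] at h
  rw [h]
  congr 1
  funext x
  rw [show (n : ℝ) + 1 - 1 = (n : ℝ) by ring, Real.rpow_natCast, mul_comm]

/-! ### Auxiliary combinatorial lemmas -/

lemma aux_alt_pascal (n : ℕ) (g : ℕ → ℝ) :
    ∑ k ∈ range (n+2), (-1:ℝ)^k * ((n+1).choose k) * g k
      = ∑ k ∈ range (n+1), (-1:ℝ)^k * (n.choose k) * g k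
        - ∑ k ∈ range (n+1), (-1:ℝ)^k * (n.choose k) * g (k+1) := by
  have hshift : ∑ k ∈ range (n+1), (-1:ℝ)^(k+1) * (n.choose (k+1)) * g (k+1)
      = (∑ k ∈ range (n+1), (-1:ℝ)^k * (n.choose k) * g k) - g 0 := by
    have h1 : ∑ k ∈ range (n+2), (-1:ℝ)^k * (n.choose k) * g k
        = ∑ k ∈ range (n+1), (-1:ℝ)^k * (n.choose k) * g k := by
      rw [Finset.sum_range_succ]
      simp [Nat.choose_succ_self]
    have h2 := Finset.sum_range_succ' (fun k => (-1:ℝ)^k * (n.choose k) * g k) (n+1)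
    rw [h1] at h2
    simp only [pow_zero, Nat.choose_zero_right, Nat.cast_one, one_mul] at h2
    linarith [h2]
  rw [Finset.sum_range_succ' (fun k => (-1:ℝ)^k * ((n+1).choose k) * g k) (n+1)]
  simp only [Nat.choose_succ_succ, Nat.cast_add, pow_zero, Nat.choose_zero_right,
    Nat.cast_one, one_mul]
  have expand : ∑ k ∈ range (n+1), (-1:ℝ)^(k+1) * ((n.choose k : ℝ) + (n.choose (k+1))) * g (k+1)
      = (∑ k ∈ range (n+1), (-1:ℝ)^(k+1) * (n.choose (k+1)) * g (k+1))
        - ∑ k ∈ range (n+1), (-1:ℝ)^k * (n.choose k) * g (k+1) := by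
    rw [← Finset.sum_sub_distrib]
    refine Finset.sum_congr rfl fun k _ => ?_
    ring
  rw [expand, hshift]
  ring

/-- `∑_{k=0}^{n} (-1)^k C(n,k) C(s+k,m) = (-1)^n C(s, m-n)` if `n ≤ m`, else `0`. -/
lemma aux_binom_alt (n : ℕ) : ∀ s m : ℕ,
    ∑ k ∈ range (n+1), (-1:ℝ)^k * (n.choose k) * ((s+k).choose m)
      = if n ≤ m then (-1:ℝ)^n * (s.choose (m-n)) else 0 := by
  induction n with
  | zero => intro s m; simp
  | succ n ih =>
    intro s m
    rw [show n+1+1 = n+2 from rfl, aux_alt_pascal n (fun k => ((s+k).choose m : ℝ))]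
    have h2 : ∑ k ∈ range (n+1), (-1:ℝ)^k * (n.choose k) * ((s+(k+1)).choose m)
        = ∑ k ∈ range (n+1), (-1:ℝ)^k * (n.choose k) * (((s+1)+k).choose m) := by
      refine Finset.sum_congr rfl fun k _ => ?_
      have hx : s+(k+1) = s+1+k := by omega
      rw [hx]
    rw [h2, ih s m, ih (s+1) m]
    by_cases h : n + 1 ≤ m
    · rw [if_pos (by omega), if_pos (by omega), if_pos h]
      have hm : m - n = (m - (n+1)) + 1 := by omega
      rw [hm, Nat.choose_succ_succ (s) (m - (n+1))]
      push_cast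
      ring
    · by_cases h' : n ≤ m
      · have hm : m = n := by omega
        rw [if_pos h', if_pos h', if_neg h, hm]
        simp
      · rw [if_neg h', if_neg h', if_neg h]
        ring

lemma aux_inner_sum (i l : ℕ) :
    ∑ k ∈ range (i+1), (-1:ℝ)^k * (i.choose k) * ((k+l+1).choose (l+1))
      = (-1:ℝ)^i * ((l+1).choose i) := by
  have h := aux_binom_alt i (l+1) (l+1)
  have h2 : ∑ k ∈ range (i+1), (-1:ℝ)^k * (i.choose k) * ((k+l+1).choose (l+1))
      = ∑ k ∈ range (i+1), (-1:ℝ)^k * (i.choose k) * (((l+1)+k).choose (l+1)) := by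
    refine Finset.sum_congr rfl fun k _ => ?_
    have hx : k+l+1 = l+1+k := by omega
    rw [hx]
  rw [h2, h]
  by_cases hi : i ≤ l+1
  · rw [if_pos hi, Nat.choose_symm hi]
  · rw [if_neg hi, Nat.choose_eq_zero_of_lt (by omega)]
    simp

lemma aux_outer_sum (i j : ℕ) :
    ∑ l ∈ range (j+1), (-1:ℝ)^l * (j.choose l) * ((l+1).choose i)
      = if j ≤ i then (-1:ℝ)^j * ((1:ℕ).choose (i-j)) else 0 := by
  have h := aux_binom_alt j 1 i
  have h2 : ∑ l ∈ range (j+1), (-1:ℝ)^l * (j.choose l) * ((l+1).choose i)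
      = ∑ l ∈ range (j+1), (-1:ℝ)^l * (j.choose l) * ((1+l).choose i) := by
    refine Finset.sum_congr rfl fun l _ => ?_
    have hx : l+1 = 1+l := by omega
    rw [hx]
  rw [h2, h]

/-! ### Factorial products -/

lemma aux_prod_Icc_fact (i : ℕ) : ∀ k : ℕ, k ≤ i →
    k.factorial * ∏ m ∈ Icc (k+1) i, m = i.factorial := by
  induction i with
  | zero => intro k hk; interval_cases k; simp
  | succ i ih =>
    intro k hk
    by_cases h : k = i + 1
    · subst h; rw [Finset.Icc_eq_empty (by omega)]; simp
    · have hk' : k ≤ i := by omega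
      rw [Finset.prod_Icc_succ_top (by omega), ← mul_assoc, ih k hk',
        Nat.factorial_succ, mul_comm]

lemma aux_prod_Icc_shift_fact (j : ℕ) : ∀ l : ℕ, l ≤ j →
    (l+1).factorial * ∏ m ∈ Icc (l+1) j, (m+1) = (j+1).factorial := by
  induction j with
  | zero => intro l hl; interval_cases l; simp
  | succ j ih =>
    intro l hl
    by_cases h : l = j + 1
    · subst h; rw [Finset.Icc_eq_empty (by omega)]; simp
    · have hl' : l ≤ j := by omega
      rw [Finset.prod_Icc_succ_top (by omega), ← mul_assoc, ih l hl',
        Nat.factorial_succ (j+1), mul_comm]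

lemma aux_prod_real_zero (i k : ℕ) (hk : k ≤ i) :
    (∏ m ∈ Icc (k+1) i, ((0:ℝ) + m)) = i.factorial / k.factorial := by
  have h := aux_prod_Icc_fact i k hk
  have hc : (∏ m ∈ Icc (k+1) i, ((0:ℝ) + m)) = ((∏ m ∈ Icc (k+1) i, m : ℕ) : ℝ) := by
    push_cast; exact Finset.prod_congr rfl fun m _ => by ring
  have hk0 : ((k.factorial : ℕ) : ℝ) ≠ 0 := by
    exact_mod_cast Nat.factorial_ne_zero _
  rw [hc, eq_div_iff hk0, mul_comm]
  exact_mod_cast h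

lemma aux_prod_real_one (j l : ℕ) (hl : l ≤ j) :
    (∏ m ∈ Icc (l+1) j, ((1:ℝ) + m)) = (j+1).factorial / (l+1).factorial := by
  have h := aux_prod_Icc_shift_fact j l hl
  have hc : (∏ m ∈ Icc (l+1) j, ((1:ℝ) + m)) = ((∏ m ∈ Icc (l+1) j, (m+1) : ℕ) : ℝ) := by
    push_cast; exact Finset.prod_congr rfl fun m _ => by ring
  have hk0 : (((l+1).factorial : ℕ) : ℝ) ≠ 0 := by
    exact_mod_cast Nat.factorial_ne_zero _
  rw [hc, eq_div_iff hk0, mul_comm]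
  exact_mod_cast h

/-! ### The coefficient identity -/

lemma aux_term_eq (i j k l : ℕ) (hk : k ≤ i) (hl : l ≤ j) :
    ((-1:ℝ)^k / k.factorial) * ((i.factorial / k.factorial) / (i-k).factorial)
      * (((-1:ℝ)^l / l.factorial) * (((j+1).factorial / (l+1).factorial) / (j-l).factorial))
      * (k+l+1).factorial
    = ((j:ℝ)+1) * (((-1:ℝ)^l * (j.choose l))
        * ((-1:ℝ)^k * (i.choose k) * (((k+l+1).choose (l+1) : ℕ) : ℝ))) := by
  have h1 : ((i.choose k : ℕ) : ℝ) = i.factorial / (k.factorial * (i-k).factorial) :=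
    Nat.cast_choose ℝ hk
  have h2 : ((j.choose l : ℕ) : ℝ) = j.factorial / (l.factorial * (j-l).factorial) :=
    Nat.cast_choose ℝ hl
  have h3 : (((k+l+1).choose (l+1) : ℕ) : ℝ)
      = (k+l+1).factorial / ((l+1).factorial * k.factorial) := by
    have := Nat.cast_choose ℝ (show l+1 ≤ k+l+1 by omega)
    rwa [show k+l+1-(l+1) = k by omega] at this
  have h4 : (((j+1).factorial : ℕ) : ℝ) = ((j:ℝ)+1) * (j.factorial) := by
    rw [Nat.factorial_succ]; push_cast; ring
  rw [h1, h2, h3, h4]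
  have n1 : (k.factorial : ℝ) ≠ 0 := by exact_mod_cast Nat.factorial_ne_zero _
  have n2 : ((i-k).factorial : ℝ) ≠ 0 := by exact_mod_cast Nat.factorial_ne_zero _
  have n3 : (l.factorial : ℝ) ≠ 0 := by exact_mod_cast Nat.factorial_ne_zero _
  have n4 : ((j-l).factorial : ℝ) ≠ 0 := by exact_mod_cast Nat.factorial_ne_zero _
  have n5 : ((l+1).factorial : ℝ) ≠ 0 := by exact_mod_cast Nat.factorial_ne_zero _
  field_simp

/-- `∫₀^∞ x·e^{−x}·L_i(x)·L_j^{(1)}(x) dx = (i+1)·δ_{i,j} − i·δ_{i−1,j}`. -/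
theorem laguerre_weighted_integral_one (i j : ℕ) :
    (∫ x in Set.Ioi (0 : ℝ), x * Real.exp (-x) * genLaguerre i 0 x * genLaguerre j 1 x)
      = (i + 1) * (if i = j then 1 else 0) - i * (if (i : ℤ) - 1 = j then 1 else 0) := by
  set a : ℕ → ℝ := fun k =>
    ((-1 : ℝ) ^ k / k.factorial) *
      ((∏ m ∈ Finset.Icc (k + 1) i, ((0:ℝ) + m)) / (i - k).factorial) with ha
  set b : ℕ → ℝ := fun l =>
    ((-1 : ℝ) ^ l / l.factorial) *
      ((∏ m ∈ Finset.Icc (l + 1) j, ((1:ℝ) + m)) / (j - l).factorial) with hb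
  have hfun : (fun x : ℝ => x * Real.exp (-x) * genLaguerre i 0 x * genLaguerre j 1 x)
      = fun x : ℝ => ∑ k ∈ range (i+1), ∑ l ∈ range (j+1),
          (a k * b l) * (x ^ (k+l+1) * Real.exp (-x)) := by
    funext x
    simp only [genLaguerre, ha, hb]
    rw [show x * Real.exp (-x) *
        (∑ k ∈ range (i+1), ((-1:ℝ)^k / k.factorial) *
          ((∏ m ∈ Finset.Icc (k+1) i, ((0:ℝ) + m)) / (i - k).factorial) * x ^ k) *
        (∑ l ∈ range (j+1), ((-1:ℝ)^l / l.factorial) *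
          ((∏ m ∈ Finset.Icc (l+1) j, ((1:ℝ) + m)) / (j - l).factorial) * x ^ l)
      = (∑ k ∈ range (i+1), ((-1:ℝ)^k / k.factorial) *
          ((∏ m ∈ Finset.Icc (k+1) i, ((0:ℝ) + m)) / (i - k).factorial) * x ^ k) *
        (∑ l ∈ range (j+1), ((-1:ℝ)^l / l.factorial) *
          ((∏ m ∈ Finset.Icc (l+1) j, ((1:ℝ) + m)) / (j - l).factorial) * x ^ l) *
        (x * Real.exp (-x)) from by ring]
    rw [Finset.sum_mul_sum]
    rw [Finset.sum_mul]
    refine Finset.sum_congr rfl fun k _ => ?_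
    rw [Finset.sum_mul]
    refine Finset.sum_congr rfl fun l _ => ?_
    ring
  rw [hfun]
  rw [integral_finset_sum _ (fun k _ => integrable_finset_sum _
    (fun l _ => ((aux_integrableOn_pow_exp (k+l+1)).const_mul (a k * b l))))]
  have hstep2 : ∀ k ∈ range (i+1),
      (∫ x in Set.Ioi (0:ℝ), ∑ l ∈ range (j+1), (a k * b l) * (x ^ (k+l+1) * Real.exp (-x)))
        = ∑ l ∈ range (j+1), (a k * b l) * ((k+l+1).factorial : ℝ) := by
    intro k _
    rw [integral_finset_sum _
      (fun l _ => ((aux_integrableOn_pow_exp (k+l+1)).const_mul (a k * b l)))]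
    refine Finset.sum_congr rfl fun l _ => ?_
    rw [MeasureTheory.integral_const_mul, aux_integral_pow_exp]
  rw [Finset.sum_congr rfl hstep2]
  -- now a purely combinatorial computation
  have hterm : ∀ k ∈ range (i+1), ∀ l ∈ range (j+1),
      (a k * b l) * ((k+l+1).factorial : ℝ)
        = ((j:ℝ)+1) * (((-1:ℝ)^l * (j.choose l))
            * ((-1:ℝ)^k * (i.choose k) * (((k+l+1).choose (l+1) : ℕ) : ℝ))) := by
    intro k hk l hl
    have hk' : k ≤ i := by
      have := Finset.mem_range.mp hk; omega
    have hl' : l ≤ j := by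
      have := Finset.mem_range.mp hl; omega
    rw [ha, hb]
    simp only [aux_prod_real_zero i k hk', aux_prod_real_one j l hl']
    rw [show (fun k => ((-1 : ℝ) ^ k / k.factorial) *
        (((i.factorial : ℝ) / k.factorial) / (i - k).factorial)) k *
        ((fun l => ((-1 : ℝ) ^ l / l.factorial) *
        ((((j+1).factorial : ℝ) / (l+1).factorial) / (j - l).factorial)) l) *
        ((k+l+1).factorial : ℝ)
      = ((-1:ℝ)^k / k.factorial) * ((i.factorial / k.factorial) / (i-k).factorial)
        * (((-1:ℝ)^l / l.factorial) * (((j+1).factorial / (l+1).factorial) / (j-l).factorial))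
        * (k+l+1).factorial from by push_cast; ring]
    exact aux_term_eq i j k l hk' hl'
  calc (∑ k ∈ range (i+1), ∑ l ∈ range (j+1), (a k * b l) * ((k+l+1).factorial : ℝ))
      = ∑ k ∈ range (i+1), ∑ l ∈ range (j+1),
          ((j:ℝ)+1) * (((-1:ℝ)^l * (j.choose l))
            * ((-1:ℝ)^k * (i.choose k) * (((k+l+1).choose (l+1) : ℕ) : ℝ))) := by
        refine Finset.sum_congr rfl fun k hk => Finset.sum_congr rfl fun l hl => ?_
        exact hterm k hk l hl
    _ = ∑ l ∈ range (j+1), ∑ k ∈ range (i+1),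
          ((j:ℝ)+1) * (((-1:ℝ)^l * (j.choose l))
            * ((-1:ℝ)^k * (i.choose k) * (((k+l+1).choose (l+1) : ℕ) : ℝ))) :=
        Finset.sum_comm
    _ = ∑ l ∈ range (j+1), ((j:ℝ)+1) * (((-1:ℝ)^l * (j.choose l))
          * ((-1:ℝ)^i * ((l+1).choose i))) := by
        refine Finset.sum_congr rfl fun l _ => ?_
        rw [← aux_inner_sum i l, Finset.mul_sum, Finset.mul_sum]
    _ = ((j:ℝ)+1) * (-1:ℝ)^i *
          ∑ l ∈ range (j+1), (-1:ℝ)^l * (j.choose l) * ((l+1).choose i) := by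
        rw [Finset.mul_sum]
        refine Finset.sum_congr rfl fun l _ => ?_
        ring
    _ = ((j:ℝ)+1) * (-1:ℝ)^i *
          (if j ≤ i then (-1:ℝ)^j * ((1:ℕ).choose (i-j)) else 0) := by
        rw [aux_outer_sum i j]
    _ = (i + 1) * (if i = j then 1 else 0) - i * (if (i : ℤ) - 1 = j then 1 else 0) := by
        by_cases hij : i = j
        · subst hij
          rw [if_pos (le_refl i), if_pos rfl, if_neg (show ¬((i:ℤ) - 1 = (i:ℤ)) by omega)]
          rw [Nat.sub_self, Nat.choose_zero_right, Nat.cast_one]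
          have hpow : (-1:ℝ)^i * (-1:ℝ)^i = 1 := by
            rw [← pow_add]
            exact Even.neg_one_pow ⟨i, by ring⟩
          linear_combination ((i:ℝ)+1) * hpow
        · by_cases hij2 : (i:ℤ) - 1 = (j:ℤ)
          · have hi : i = j + 1 := by omega
            subst hi
            rw [if_pos (by omega : j ≤ j+1), if_neg hij, if_pos hij2]
            rw [show j + 1 - j = 1 by omega, Nat.choose_one_right, Nat.cast_one]
            have hpow : (-1:ℝ)^(j+1) * (-1:ℝ)^j = -1 := by
              rw [← pow_add]
              exact Odd.neg_one_pow ⟨j, by ring⟩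
            push_cast
            linear_combination ((j:ℝ)+1) * hpow
          · rw [if_neg hij, if_neg hij2]
            by_cases h : j ≤ i
            · have h2 : 1 < i - j := by omega
              rw [if_pos h, Nat.choose_eq_zero_of_lt h2]
              simp
            · rw [if_neg h]
              ring
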